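/- Let p be a prime and let K, L be disjoint subsets of {0,1,...,p-1} with |K| = r, |L| = s. Let 𝒜 = {A₁,...,A_m} be a family of subsets of {1,...,n} with |A_i| mod p ∈ K for all i and |A_i ∩ A_j| mod p ∈ L for i ≠ j. For each subset I of X = {1,...,n-1}, define the linear form L_I = Σ_{i : I ⊆ A_i} x_i over F_p. Then the only solution over F_p to the system {L_I = 0 : I ⊆ X, |I| ≤ s} is the zero solution. Consequently, m ≤ dim span{L_I : I ⊆ X, |I| ≤ s}. -/

import Mathlib

open Finset

-- per-term binomial identity in ZMod p
lemma keyid (p : ℕ) (a : ZMod p) (x t : ℕ) :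
    ((x : ZMod p) - a) * (x.choose t : ZMod p)
      = ((t + 1 : ℕ) : ZMod p) * (x.choose (t + 1) : ZMod p)
        + ((t : ZMod p) - a) * (x.choose t : ZMod p) := by
  have h : (x : ZMod p) * (x.choose t : ZMod p)
      = ((t + 1 : ℕ) : ZMod p) * (x.choose (t + 1) : ZMod p)
        + (t : ZMod p) * (x.choose t : ZMod p) := by
    rcases lt_or_ge x t with h | h
    · rw [Nat.choose_eq_zero_of_lt h, Nat.choose_eq_zero_of_lt (h.trans (Nat.lt_succ_self t))]
      push_cast; ring
    · have hc := Nat.choose_succ_right_eq x t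
      have hc2 : ((x.choose (t + 1) * (t + 1) : ℕ) : ZMod p)
          = ((x.choose t * (x - t) : ℕ) : ZMod p) := by rw [hc]
      rw [Nat.cast_mul, Nat.cast_mul, Nat.cast_sub h] at hc2
      push_cast at hc2 ⊢
      linear_combination -hc2
  linear_combination h

lemma newton (p : ℕ) (T : Finset (ZMod p)) :
    ∃ c : ℕ → ZMod p, (∀ t, T.card < t → c t = 0) ∧
      ∀ x : ℕ, ∑ t ∈ Finset.range (T.card + 1), c t * (x.choose t : ZMod p)
        = ∏ l ∈ T, ((x : ZMod p) - l) := by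
  classical
  induction T using Finset.induction_on with
  | empty =>
      refine ⟨fun t => if t = 0 then 1 else 0, ?_, ?_⟩
      · intro t ht; simp at ht ⊢; omega
      · intro x; simp
  | insert a T' ha ih =>
      obtain ⟨c, hc0, hc⟩ := ih
      refine ⟨fun u => (u : ZMod p) * c (u - 1) + ((u : ZMod p) - a) * c u, ?_, ?_⟩
      · intro t ht
        rw [Finset.card_insert_of_notMem ha] at ht
        show (t : ZMod p) * c (t - 1) + ((t : ZMod p) - a) * c t = 0
        rw [hc0 t (by omega), hc0 (t - 1) (by omega), mul_zero, mul_zero, add_zero]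
      · intro x
        rw [Finset.card_insert_of_notMem ha, Finset.prod_insert ha, ← hc x]
        have expand : ∀ u ∈ Finset.range (T'.card + 1 + 1),
            ((u : ZMod p) * c (u - 1) + ((u : ZMod p) - a) * c u) * (x.choose u : ZMod p)
            = (u : ZMod p) * c (u - 1) * (x.choose u : ZMod p)
              + ((u : ZMod p) - a) * c u * (x.choose u : ZMod p) := fun u _ => by ring
        rw [Finset.sum_congr rfl expand, Finset.sum_add_distrib]
        have e1 : ∑ u ∈ Finset.range (T'.card + 1 + 1),
            (u : ZMod p) * c (u - 1) * (x.choose u : ZMod p)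
            = ∑ t ∈ Finset.range (T'.card + 1),
              ((t + 1 : ℕ) : ZMod p) * c t * (x.choose (t + 1) : ZMod p) := by
          rw [Finset.sum_range_succ']
          simp
        have e2 : ∑ u ∈ Finset.range (T'.card + 1 + 1),
            ((u : ZMod p) - a) * c u * (x.choose u : ZMod p)
            = ∑ t ∈ Finset.range (T'.card + 1),
              ((t : ZMod p) - a) * c t * (x.choose t : ZMod p) := by
          rw [Finset.sum_range_succ, hc0 (T'.card + 1) (by omega)]
          simp
        rw [e1, e2, ← Finset.sum_add_distrib, Finset.mul_sum]
        refine Finset.sum_congr rfl fun t _ => ?_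
        have := keyid p a x t
        linear_combination -c t * this

open Finset

lemma countlem (p : ℕ) (D C : Finset ℕ) (t : ℕ) (w : ZMod p) :
    ∑ I ∈ Finset.powersetCard t D, (if I ⊆ C then w else 0)
      = w * ((C ∩ D).card.choose t : ZMod p) := by
  classical
  rw [← Finset.sum_filter]
  have hfil : (Finset.powersetCard t D).filter (· ⊆ C) = Finset.powersetCard t (C ∩ D) := by
    ext I
    simp only [Finset.mem_filter, Finset.mem_powersetCard, Finset.subset_inter_iff]
    tauto
  rw [hfil, Finset.sum_const, Finset.card_powersetCard, nsmul_eq_mul, mul_comm]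

lemma corelem {p n s m : ℕ} (hp : p.Prime) (A : Fin m → Finset ℕ) (v : Fin m → ZMod p)
    (hv : ∀ I : Finset ℕ, I ⊆ Finset.Icc 1 (n - 1) → I.card ≤ s →
          ∑ i : Fin m, (if I ⊆ A i then v i else 0) = 0)
    (j : Fin m) (hj : v j ≠ 0)
    (D : Finset ℕ) (hD : D ⊆ Finset.Icc 1 (n - 1))
    (T : Finset (ZMod p)) (hT : T.card ≤ s)
    (hzero : ∀ i, v i ≠ 0 → i ≠ j → (((A i ∩ D).card : ZMod p)) ∈ T)
    (hnz : ∀ l ∈ T, ((A j ∩ D).card : ZMod p) ≠ l) : False := by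
  classical
  haveI : Fact p.Prime := ⟨hp⟩
  obtain ⟨c, hc0, hc⟩ := newton p T
  have hc' : ∀ x : ℕ, ∑ t ∈ Finset.range (s + 1), c t * (x.choose t : ZMod p)
      = ∏ l ∈ T, ((x : ZMod p) - l) := by
    intro x
    rw [← hc x]
    refine (Finset.sum_subset ?_ ?_).symm
    · intro t ht; simp only [Finset.mem_range] at ht ⊢; omega
    · intro t ht hnt
      simp only [Finset.mem_range] at ht hnt
      rw [hc0 t (by omega), zero_mul]
  have main : ∑ i : Fin m, v i * ∏ l ∈ T, (((A i ∩ D).card : ZMod p) - l) = 0 := by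
    calc ∑ i : Fin m, v i * ∏ l ∈ T, (((A i ∩ D).card : ZMod p) - l)
        = ∑ i : Fin m, ∑ t ∈ Finset.range (s + 1),
            c t * (v i * ((A i ∩ D).card.choose t : ZMod p)) := by
          refine Finset.sum_congr rfl fun i _ => ?_
          rw [← hc' ((A i ∩ D).card), Finset.mul_sum]
          exact Finset.sum_congr rfl fun t _ => by ring
      _ = ∑ t ∈ Finset.range (s + 1), ∑ i : Fin m,
            c t * (v i * ((A i ∩ D).card.choose t : ZMod p)) := Finset.sum_comm
      _ = ∑ t ∈ Finset.range (s + 1), c t * ∑ I ∈ Finset.powersetCard t D,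
            ∑ i : Fin m, (if I ⊆ A i then v i else 0) := by
          refine Finset.sum_congr rfl fun t _ => ?_
          rw [Finset.sum_comm (s := Finset.powersetCard t D), Finset.mul_sum]
          refine Finset.sum_congr rfl fun i _ => ?_
          rw [countlem]
      _ = 0 := by
          refine Finset.sum_eq_zero fun t ht => ?_
          rw [Finset.sum_eq_zero, mul_zero]
          intro I hI
          rw [Finset.mem_powersetCard] at hI
          refine hv I (hI.1.trans hD) ?_
          rw [hI.2]
          simp only [Finset.mem_range] at ht
          omega
  rw [Finset.sum_eq_single_of_mem j (Finset.mem_univ j)] at main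
  · have hprod : ∏ l ∈ T, (((A j ∩ D).card : ZMod p) - l) ≠ 0 :=
      Finset.prod_ne_zero_iff.mpr fun l hl => sub_ne_zero.mpr (hnz l hl)
    exact hj ((mul_eq_zero.mp main).resolve_right hprod)
  · intro i _ hij
    by_cases hvi : v i = 0
    · rw [hvi, zero_mul]
    · rw [Finset.prod_eq_zero (hzero i hvi hij) (sub_self _), mul_zero]
theorem stmt8 (p n r s m : ℕ) (hp : p.Prime) (K L : Finset ℕ)
    (hK : K ⊆ Finset.range p) (hL : L ⊆ Finset.range p) (hdisj : Disjoint K L)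
    (hKr : K.card = r) (hLs : L.card = s)
    (A : Fin m → Finset ℕ) (hinj : Function.Injective A)
    (hsub : ∀ i, A i ⊆ Finset.Icc 1 n)
    (hsize : ∀ i, (A i).card % p ∈ K)
    (hint : ∀ i j, i ≠ j → (A i ∩ A j).card % p ∈ L) :
    (∀ v : Fin m → ZMod p,
        (∀ I : Finset ℕ, I ⊆ Finset.Icc 1 (n - 1) → I.card ≤ s →
          ∑ i : Fin m, (if I ⊆ A i then v i else 0) = 0) → v = 0) ∧
    m ≤ Module.finrank (ZMod p)
        (Submodule.span (ZMod p)
          {w : Fin m → ZMod p | ∃ I : Finset ℕ, I ⊆ Finset.Icc 1 (n - 1) ∧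
            I.card ≤ s ∧ w = fun i => if I ⊆ A i then 1 else 0}) := by
  classical
  haveI : Fact p.Prime := ⟨hp⟩
  have hcast : ∀ a ∈ K, ∀ b ∈ L, (a : ZMod p) ≠ (b : ZMod p) := by
    intro a ha b hb hab
    have ha' := Finset.mem_range.mp (hK ha)
    have hb' := Finset.mem_range.mp (hL hb)
    have hab' : a = b := by
      have := congrArg ZMod.val hab
      rwa [ZMod.val_cast_of_lt ha', ZMod.val_cast_of_lt hb'] at this
    exact Finset.disjoint_left.mp hdisj ha (hab' ▸ hb)
  have part1 : ∀ v : Fin m → ZMod p,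
      (∀ I : Finset ℕ, I ⊆ Finset.Icc 1 (n - 1) → I.card ≤ s →
        ∑ i : Fin m, (if I ⊆ A i then v i else 0) = 0) → v = 0 := by
    intro v hv
    by_contra hvne
    obtain ⟨j0, hj0⟩ : ∃ j, v j ≠ 0 := by
      by_contra h; push_neg at h; exact hvne (funext h)
    by_cases hcase : ∃ j, v j ≠ 0 ∧ n ∉ A j
    · -- Case A : some support set avoids n
      obtain ⟨j, hj, hnj⟩ := hcase
      refine corelem hp A v hv j hj (A j) ?_ (L.image (fun l : ℕ => (l : ZMod p)))
        (le_trans Finset.card_image_le (le_of_eq hLs)) ?_ ?_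
      · intro x hx
        have h1 := Finset.mem_Icc.mp (hsub j hx)
        have h2 : x ≠ n := fun h => hnj (h ▸ hx)
        rw [Finset.mem_Icc]; omega
      · intro i hvi hij
        refine Finset.mem_image.mpr ⟨(A i ∩ A j).card % p, hint i j hij, ?_⟩
        rw [ZMod.natCast_mod]
      · intro l hl
        obtain ⟨b, hb, rfl⟩ := Finset.mem_image.mp hl
        rw [Finset.inter_self]
        intro h
        refine hcast _ (hsize j) b hb ?_
        rwa [ZMod.natCast_mod]
    · -- Case B : every support set contains n
      push_neg at hcase
      have hnmem : ∀ i, v i ≠ 0 → n ∈ A i := fun i hi => hcase i hi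
      have hnj0 : n ∈ A j0 := hnmem j0 hj0
      refine corelem hp A v hv j0 hj0 ((A j0).erase n) ?_
        (L.image (fun l : ℕ => (l : ZMod p) - 1))
        (le_trans Finset.card_image_le (le_of_eq hLs)) ?_ ?_
      · intro x hx
        have h1 := Finset.mem_Icc.mp (hsub j0 (Finset.mem_of_mem_erase hx))
        have h2 : x ≠ n := Finset.ne_of_mem_erase hx
        rw [Finset.mem_Icc]; omega
      · intro i hvi hij
        have hni : n ∈ A i := hnmem i hvi
        have hint' : A i ∩ (A j0).erase n = (A i ∩ A j0).erase n := by
          ext x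
          simp only [Finset.mem_inter, Finset.mem_erase]
          tauto
        have hcard : (A i ∩ (A j0).erase n).card = (A i ∩ A j0).card - 1 := by
          rw [hint', Finset.card_erase_of_mem (Finset.mem_inter.mpr ⟨hni, hnj0⟩)]
        have hpos : 1 ≤ (A i ∩ A j0).card :=
          Finset.card_pos.mpr ⟨n, Finset.mem_inter.mpr ⟨hni, hnj0⟩⟩
        refine Finset.mem_image.mpr ⟨(A i ∩ A j0).card % p, hint i j0 hij, ?_⟩
        rw [hcard, Nat.cast_sub hpos, Nat.cast_one, ZMod.natCast_mod]
      · intro l hl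
        obtain ⟨b, hb, rfl⟩ := Finset.mem_image.mp hl
        have hDsub : (A j0).erase n ⊆ A j0 := Finset.erase_subset _ _
        rw [Finset.inter_eq_right.mpr hDsub, Finset.card_erase_of_mem hnj0]
        have hpos : 1 ≤ (A j0).card := Finset.card_pos.mpr ⟨n, hnj0⟩
        rw [Nat.cast_sub hpos, Nat.cast_one]
        intro h
        refine hcast _ (hsize j0) b hb ?_
        rw [ZMod.natCast_mod]
        linear_combination h
  refine ⟨part1, ?_⟩
  set S : Set (Fin m → ZMod p) :=
    {w : Fin m → ZMod p | ∃ I : Finset ℕ, I ⊆ Finset.Icc 1 (n - 1) ∧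
      I.card ≤ s ∧ w = fun i => if I ⊆ A i then 1 else 0} with hS
  have hspan : Submodule.span (ZMod p) S = ⊤ := by
    by_contra hne
    obtain ⟨x, hx⟩ : ∃ x, x ∉ Submodule.span (ZMod p) S := by
      by_contra h; push_neg at h
      exact hne (eq_top_iff.mpr fun x _ => h x)
    obtain ⟨f, hfx, hf⟩ := Submodule.exists_dual_map_eq_bot_of_notMem hx inferInstance
    set v : Fin m → ZMod p := fun i => f (Pi.single i 1) with hvdef
    have hfw : ∀ w : Fin m → ZMod p, f w = ∑ i, w i * v i := by
      intro w
      have hw : w = ∑ i, w i • (Pi.single i (1 : ZMod p) : Fin m → ZMod p) := by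
        funext k
        rw [Finset.sum_apply]
        simp [Pi.single_apply]
      conv_lhs => rw [hw]
      rw [map_sum]
      exact Finset.sum_congr rfl fun i _ => by rw [map_smul, smul_eq_mul]
    have hfS : ∀ w ∈ S, f w = 0 := by
      intro w hw
      have : f w ∈ Submodule.map f (Submodule.span (ZMod p) S) :=
        Submodule.mem_map_of_mem (Submodule.subset_span hw)
      rwa [hf, Submodule.mem_bot] at this
    have hv0 : v = 0 := by
      refine part1 v ?_
      intro I hI hIs
      have h0 := hfS (fun i => if I ⊆ A i then 1 else 0) ⟨I, hI, hIs, rfl⟩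
      rw [hfw] at h0
      simpa [ite_mul, one_mul, zero_mul] using h0
    apply hfx
    rw [hfw, hv0]
    simp
  rw [hspan]
  rw [finrank_top]
  simp [Module.finrank_pi]
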